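/- Let Q_q, Q_p, P_q, P_p, Q_t, P_t, and row vectors W_q, W_p be as in Proposition on canonical coordinates. The Jacobian block matrix Z_z = [[Q_q, Q_t, Q_p, 0],[0,1,0,0],[P_q, P_t, P_p, 0],[W_q, W_t, W_p, 1]] satisfies Z_zᵀ J̃ Z_z = J̃ (with J̃ the symplectic matrix for ordering (q,t,p,u)) if and only if Y_yᵀ J_n Y_y = J_n and [W_q W_p] = −Y_tᵀ J_n Y_y, where Y_y = [[Q_q, Q_p],[P_q, P_p]] and Y_t = [Q_t; P_t]. -/

import Mathlib

open Matrix

/-- Standard symplectic matrix `J_n = [[0, Iₙ], [-Iₙ, 0]]`. -/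
def Jmat (n : ℕ) : Matrix (Fin n ⊕ Fin n) (Fin n ⊕ Fin n) ℝ :=
  Matrix.fromBlocks 0 1 (-1) 0

/-- The symplectic matrix of the 2-form `dp∧dq + du∧dt` on `ℝ^{2n+2}` in the coordinate
ordering `(q, t, p, u)`. -/
def Jext (n : ℕ) : Matrix ((Fin n ⊕ Fin 1) ⊕ (Fin n ⊕ Fin 1))
    ((Fin n ⊕ Fin 1) ⊕ (Fin n ⊕ Fin 1)) ℝ :=
  Matrix.fromBlocks 0 1 (-1) 0

/-- The Jacobian block matrix `Z_z = [[Q_q, Q_t, Q_p, 0],[0,1,0,0],[P_q, P_t, P_p, 0],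
[W_q, W_t, W_p, 1]]` satisfies `Z_zᵀ J̃ Z_z = J̃` if and only if `Y_yᵀ Jₙ Y_y = Jₙ` and
`[W_q W_p] = -Y_tᵀ Jₙ Y_y`, where `Y_y = [[Q_q, Q_p],[P_q, P_p]]` and `Y_t = [Q_t; P_t]`. -/
theorem jacobian_symplectic_iff (n : ℕ) (hn : 1 ≤ n)
    (Qq Qp Pq Pp : Matrix (Fin n) (Fin n) ℝ)
    (Qt Pt : Fin n → ℝ) (Wq Wp : Fin n → ℝ) (Wt : ℝ)
    (Z : Matrix ((Fin n ⊕ Fin 1) ⊕ (Fin n ⊕ Fin 1))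
      ((Fin n ⊕ Fin 1) ⊕ (Fin n ⊕ Fin 1)) ℝ)
    (hZ : Z = Matrix.fromBlocks
      (Matrix.fromBlocks Qq (Matrix.of fun i _ => Qt i) 0 1)
      (Matrix.fromBlocks Qp 0 0 0)
      (Matrix.fromBlocks Pq (Matrix.of fun i _ => Pt i) (Matrix.of fun _ j => Wq j)
        (Matrix.of fun _ _ => Wt))
      (Matrix.fromBlocks Pp 0 (Matrix.of fun _ j => Wp j) 1))
    (Yy : Matrix (Fin n ⊕ Fin n) (Fin n ⊕ Fin n) ℝ)
    (hYy : Yy = Matrix.fromBlocks Qq Qp Pq Pp)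
    (Yt : Matrix (Fin n ⊕ Fin n) (Fin 1) ℝ)
    (hYt : Yt = Matrix.of fun i _ => Sum.elim Qt Pt i) :
    Zᵀ * Jext n * Z = Jext n ↔
      (Yyᵀ * Jmat n * Yy = Jmat n ∧
        (Matrix.of fun _ j => Sum.elim Wq Wp j) = -(Ytᵀ * Jmat n * Yy)) := by

  subst hZ hYy hYt
  have hYt' : (Matrix.of fun i (_ : Fin 1) => Sum.elim Qt Pt i) =
      fromRows (Matrix.of fun i _ => Qt i) (Matrix.of fun i _ => Pt i) := by
    ext i j; cases i <;> rfl
  have hW : (Matrix.of fun (_ : Fin 1) j => Sum.elim Wq Wp j) =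
      fromCols (Matrix.of fun _ j => Wq j) (Matrix.of fun _ j => Wp j) := by
    ext i j; cases j <;> rfl
  rw [hYt', hW]
  have h0 : (0 : Matrix (Fin n ⊕ Fin 1) (Fin n ⊕ Fin 1) ℝ) = fromBlocks 0 0 0 0 :=
    Matrix.fromBlocks_zero.symm
  have h1 : (1 : Matrix (Fin n ⊕ Fin 1) (Fin n ⊕ Fin 1) ℝ) = fromBlocks 1 0 0 1 :=
    Matrix.fromBlocks_one.symm
  have h0' : (0 : Matrix (Fin n ⊕ Fin n) (Fin n ⊕ Fin n) ℝ) = fromBlocks 0 0 0 0 :=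
    Matrix.fromBlocks_zero.symm
  have h1' : (1 : Matrix (Fin n ⊕ Fin n) (Fin n ⊕ Fin n) ℝ) = fromBlocks 1 0 0 1 :=
    Matrix.fromBlocks_one.symm
  simp only [Jext, Jmat, Matrix.fromBlocks_transpose, Matrix.fromBlocks_multiply,
    Matrix.transpose_fromRows, Matrix.fromCols_mul_fromBlocks,
    Matrix.mul_zero, Matrix.zero_mul, Matrix.mul_one, Matrix.one_mul, Matrix.mul_neg,
    Matrix.neg_mul, add_zero, zero_add, neg_zero, Matrix.transpose_zero, Matrix.transpose_one,
    Matrix.fromBlocks_neg, Matrix.fromBlocks_add, Matrix.fromCols_neg]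
  rw [h0, h1]
  simp only [Matrix.fromBlocks_neg, neg_zero]
  simp only [Matrix.fromBlocks_inj, Matrix.fromCols_inj.eq_iff]
  constructor
  · rintro ⟨⟨e1, -, e3, -⟩, ⟨e5, -, e6, -⟩, ⟨e7, -, -, -⟩, e9, -⟩
    refine ⟨⟨e1, e5, e7, e9⟩, ?_, ?_⟩
    · rw [← add_assoc] at e3; exact eq_neg_of_add_eq_zero_right e3
    · rw [← add_assoc] at e6; exact eq_neg_of_add_eq_zero_right e6
  · rintro ⟨⟨e1, e5, e7, e9⟩, hw, hp⟩
    have h3 : -((Matrix.of fun i (_ : Fin 1) => Pt i)ᵀ * Qq) +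
        (((Matrix.of fun i (_ : Fin 1) => Qt i)ᵀ * Pq) + Matrix.of fun (_ : Fin 1) j => Wq j) = 0 := by
      rw [hw]; abel
    have h6 : -((Matrix.of fun i (_ : Fin 1) => Pt i)ᵀ * Qp) +
        (((Matrix.of fun i (_ : Fin 1) => Qt i)ᵀ * Pp) + Matrix.of fun (_ : Fin 1) j => Wp j) = 0 := by
      rw [hp]; abel
    have h2 : (-(Pqᵀ * Matrix.of fun i (_ : Fin 1) => Qt i) + -(Matrix.of fun (_ : Fin 1) j => Wq j)ᵀ
        + Qqᵀ * Matrix.of fun i (_ : Fin 1) => Pt i) = 0 := by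
      rw [hw]
      simp only [Matrix.transpose_neg, Matrix.transpose_add, Matrix.transpose_mul,
        Matrix.transpose_transpose]
      abel
    have h8 : (-(Ppᵀ * Matrix.of fun i (_ : Fin 1) => Qt i) + -(Matrix.of fun (_ : Fin 1) j => Wp j)ᵀ
        + Qpᵀ * Matrix.of fun i (_ : Fin 1) => Pt i) = 0 := by
      rw [hp]
      simp only [Matrix.transpose_neg, Matrix.transpose_add, Matrix.transpose_mul,
        Matrix.transpose_transpose]
      abel
    have h4 : -((Matrix.of fun i (_ : Fin 1) => Pt i)ᵀ * Matrix.of fun i (_ : Fin 1) => Qt i) +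
        -(Matrix.of fun (_ : Fin 1) (_ : Fin 1) => Wt)ᵀ +
        (((Matrix.of fun i (_ : Fin 1) => Qt i)ᵀ * Matrix.of fun i (_ : Fin 1) => Pt i) +
          Matrix.of fun (_ : Fin 1) (_ : Fin 1) => Wt) = 0 := by
      ext i j
      simp [Matrix.mul_apply, mul_comm]
      ring
    exact ⟨⟨e1, h2, h3, h4⟩, ⟨e5, trivial, h6, trivial⟩, ⟨e7, h8, trivial, trivial⟩,
      e9, trivial, trivial, trivial⟩
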